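/- Let B be an invertible real 2×2 matrix, a ∈ ℝ², F(x̂) = B x̂ + a, and J := det B. Let Û ⊆ ℝ² be open. Let Ξ̂ : Û → ℝ^{2×2} and τ̂ : Û → ℝ² be continuously differentiable and û : Û → ℝ twice continuously differentiable, with transforms Ξ (Piola–Kirchhoff: Ξ(F(x̂)) := |J|⁻¹ B Ξ̂(x̂) Bᵀ), τ (Piola: τ(F(x̂)) := |J|⁻¹ B τ̂(x̂)), and u := û ∘ F⁻¹ on F(Û). Let T̂ ⊆ Û be a compact measurable set and T := F(T̂). Then ∫_T [ u·(div τ) + ∇u · (τ − Div Ξ) − ∇∇u : Ξ ] dx = ∫_{T̂} [ û·(div τ̂) + ∇û · (τ̂ − Div Ξ̂) − ∇∇û : Ξ̂ ] dx̂, where the integrals are with respect to two-dimensional Lebesgue measure. -/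

import Mathlib

open MeasureTheory Matrix

/-- The `i`-th partial derivative of a scalar field on `ℝ²`. -/
noncomputable def pd (i : Fin 2) (f : (Fin 2 → ℝ) → ℝ) (x : Fin 2 → ℝ) : ℝ :=
  fderiv ℝ f x (Pi.single i 1)

/-- The gradient `∇f = (∂₁f, ∂₂f)` of a scalar field on `ℝ²`. -/
noncomputable def gradF (f : (Fin 2 → ℝ) → ℝ) (x : Fin 2 → ℝ) : Fin 2 → ℝ :=
  fun i => pd i f x

/-- The divergence `div τ = ∂₁τ₁ + ∂₂τ₂` of a vector field on `ℝ²`. -/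
noncomputable def divVec (τ : (Fin 2 → ℝ) → (Fin 2 → ℝ)) (x : Fin 2 → ℝ) : ℝ :=
  ∑ i : Fin 2, pd i (fun y => τ y i) x

/-- The row-wise divergence `(Div N)_i = Σ_j ∂_j N_{ij}` of a matrix field. -/
noncomputable def DivMat (N : (Fin 2 → ℝ) → Matrix (Fin 2) (Fin 2) ℝ)
    (x : Fin 2 → ℝ) : Fin 2 → ℝ :=
  fun i => ∑ j : Fin 2, pd j (fun y => N y i j) x

/-- The Hessian `∇∇u = (∂_i ∂_j u)_{ij}` of a scalar field. -/
noncomputable def hessian (f : (Fin 2 → ℝ) → ℝ) (x : Fin 2 → ℝ) :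
    Matrix (Fin 2) (Fin 2) ℝ :=
  Matrix.of fun i j => pd i (pd j f) x

/-- Frobenius inner product `A : C = Σ_{i,j} A_{ij} C_{ij}` of 2×2 matrices. -/
def frob (A C : Matrix (Fin 2) (Fin 2) ℝ) : ℝ :=
  ∑ i : Fin 2, ∑ j : Fin 2, A i j * C i j

set_option maxHeartbeats 4000000

private lemma hasFDerivAt_affine_sub (M : Matrix (Fin 2) (Fin 2) ℝ) (a y : Fin 2 → ℝ) :
    HasFDerivAt (fun z : Fin 2 → ℝ => M.mulVec (z - a))
      (LinearMap.toContinuousLinearMap (Matrix.mulVecLin M)) y := by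
  have h := ((LinearMap.toContinuousLinearMap (Matrix.mulVecLin M)).hasFDerivAt
      (x := y - a)).comp y ((hasFDerivAt_id y).sub_const a)
  simpa [Function.comp] using h

private lemma transfer_pd (B : Matrix (Fin 2) (Fin 2) ℝ) (hB : IsUnit B.det) (a : Fin 2 → ℝ)
    (Uhat : Set (Fin 2 → ℝ)) (hUhat : IsOpen Uhat)
    (f g : (Fin 2 → ℝ) → ℝ) (hg : DifferentiableOn ℝ g Uhat)
    (hfg : ∀ y ∈ Uhat, f (B.mulVec y + a) = g y)
    {x : Fin 2 → ℝ} (hx : x ∈ Uhat) (k : Fin 2) :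
    pd k f (B.mulVec x + a)
      = B⁻¹ 0 k * pd 0 g x + B⁻¹ 1 k * pd 1 g x := by
  have hGF : ∀ z, B⁻¹.mulVec ((B.mulVec z + a) - a) = z := by
    intro z
    simp only [add_sub_cancel_right, Matrix.mulVec_mulVec, Matrix.nonsing_inv_mul B hB,
      Matrix.one_mulVec]
  have hFG : ∀ y, B.mulVec (B⁻¹.mulVec (y - a)) + a = y := by
    intro y
    simp only [Matrix.mulVec_mulVec, Matrix.mul_nonsing_inv B hB, Matrix.one_mulVec]
    abel
  have hcontG : Continuous (fun y : Fin 2 → ℝ => B⁻¹.mulVec (y - a)) := by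
    have : Differentiable ℝ (fun y : Fin 2 → ℝ => B⁻¹.mulVec (y - a)) :=
      fun y => (hasFDerivAt_affine_sub B⁻¹ a y).differentiableAt
    exact this.continuous
  have hgd : DifferentiableAt ℝ g x := hg.differentiableAt (hUhat.mem_nhds hx)
  have key : fderiv ℝ f (B.mulVec x + a)
      = (fderiv ℝ g x).comp (LinearMap.toContinuousLinearMap (Matrix.mulVecLin B⁻¹)) := by
    have heq : f =ᶠ[nhds (B.mulVec x + a)] fun y => g (B⁻¹.mulVec (y - a)) := by
      have hopen : IsOpen ((fun y : Fin 2 → ℝ => B⁻¹.mulVec (y - a)) ⁻¹' Uhat) :=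
        hUhat.preimage hcontG
      have hmem : (B.mulVec x + a) ∈ (fun y : Fin 2 → ℝ => B⁻¹.mulVec (y - a)) ⁻¹' Uhat := by
        simp only [Set.mem_preimage, hGF x]; exact hx
      filter_upwards [hopen.mem_nhds hmem] with y hy
      have h2 := hfg _ hy
      rwa [hFG y] at h2
    rw [heq.fderiv_eq]
    have h2 : HasFDerivAt g (fderiv ℝ g x)
        ((fun z : Fin 2 → ℝ => B⁻¹.mulVec (z - a)) (B.mulVec x + a)) := by
      simp only [hGF x]; exact hgd.hasFDerivAt
    have hcomp : HasFDerivAt (g ∘ fun z : Fin 2 → ℝ => B⁻¹.mulVec (z - a))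
        ((fderiv ℝ g x).comp (LinearMap.toContinuousLinearMap (Matrix.mulVecLin B⁻¹)))
        (B.mulVec x + a) :=
      HasFDerivAt.comp _ h2 (hasFDerivAt_affine_sub B⁻¹ a _)
    exact hcomp.fderiv
  have hsingle : B⁻¹.mulVec (Pi.single k 1)
      = B⁻¹ 0 k • (Pi.single 0 1 : Fin 2 → ℝ) + B⁻¹ 1 k • (Pi.single 1 1 : Fin 2 → ℝ) := by
    funext j; fin_cases j <;> simp [Matrix.mulVec_single, Pi.single_apply]
  show fderiv ℝ f (B.mulVec x + a) (Pi.single k 1) = _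
  rw [key]
  have happ : (LinearMap.toContinuousLinearMap (Matrix.mulVecLin B⁻¹)) (Pi.single k 1)
      = B⁻¹.mulVec (Pi.single k 1) := rfl
  rw [ContinuousLinearMap.comp_apply, happ, hsingle]
  simp [pd, map_add, ContinuousLinearMap.map_smul, smul_eq_mul]

private lemma hasFDerivAt_affine_add (M : Matrix (Fin 2) (Fin 2) ℝ) (a y : Fin 2 → ℝ) :
    HasFDerivAt (fun z : Fin 2 → ℝ => M.mulVec z + a)
      (LinearMap.toContinuousLinearMap (Matrix.mulVecLin M)) y := by
  have h := ((LinearMap.toContinuousLinearMap (Matrix.mulVecLin M)).hasFDerivAt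
      (x := y)).add_const a
  simpa using h

private lemma pd_comb2 {h1 h2 : (Fin 2 → ℝ) → ℝ} {x : Fin 2 → ℝ}
    (hd1 : DifferentiableAt ℝ h1 x) (hd2 : DifferentiableAt ℝ h2 x) (c1 c2 : ℝ) (j : Fin 2) :
    pd j (fun y => c1 * h1 y + c2 * h2 y) x = c1 * pd j h1 x + c2 * pd j h2 x := by
  unfold pd
  rw [fderiv_fun_add ((hd1.const_mul c1)) ((hd2.const_mul c2)), fderiv_const_mul hd1 c1,
    fderiv_const_mul hd2 c2]
  simp

private lemma pd_comb4 {h1 h2 h3 h4 : (Fin 2 → ℝ) → ℝ} {x : Fin 2 → ℝ}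
    (hd1 : DifferentiableAt ℝ h1 x) (hd2 : DifferentiableAt ℝ h2 x)
    (hd3 : DifferentiableAt ℝ h3 x) (hd4 : DifferentiableAt ℝ h4 x)
    (c1 c2 c3 c4 : ℝ) (j : Fin 2) :
    pd j (fun y => c1 * h1 y + c2 * h2 y + c3 * h3 y + c4 * h4 y) x
      = c1 * pd j h1 x + c2 * pd j h2 x + c3 * pd j h3 x + c4 * pd j h4 x := by
  unfold pd
  rw [fderiv_fun_add (((hd1.const_mul c1).fun_add (hd2.const_mul c2)).fun_add (hd3.const_mul c3))
      (hd4.const_mul c4),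
    fderiv_fun_add ((hd1.const_mul c1).fun_add (hd2.const_mul c2)) (hd3.const_mul c3),
    fderiv_fun_add (hd1.const_mul c1) (hd2.const_mul c2),
    fderiv_const_mul hd1 c1, fderiv_const_mul hd2 c2, fderiv_const_mul hd3 c3,
    fderiv_const_mul hd4 c4]
  simp

/-- Invariance of the trace duality `⟨tr u, (Ξ,τ)⟩_{∂T}`, i.e. of the
integral `∫_T u (div τ) + ∇u · (τ − Div Ξ) − ∇∇u : Ξ dx`, under the combined
Piola–Kirchhoff / Piola transformation (trace-duality identity of Lemma 9, smooth case).
Here `Xihat` plays the role of `Ξ̂`, `tauhat` of `τ̂`, `uhat` of `û`, `Uhat` of `Û`,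
`That` of `T̂`, `xhat` of `x̂`. -/
theorem stmt11
    (B : Matrix (Fin 2) (Fin 2) ℝ) (hB : IsUnit B.det) (a : Fin 2 → ℝ)
    (F : (Fin 2 → ℝ) → (Fin 2 → ℝ)) (hF : ∀ xhat, F xhat = B.mulVec xhat + a)
    (Uhat : Set (Fin 2 → ℝ)) (hUhat : IsOpen Uhat)
    (Xihat Ξ : (Fin 2 → ℝ) → Matrix (Fin 2) (Fin 2) ℝ)
    (hXismooth : ∀ i j : Fin 2, ContDiffOn ℝ 1 (fun x => Xihat x i j) Uhat)
    (hXi : ∀ xhat ∈ Uhat, Ξ (F xhat) = |B.det|⁻¹ • (B * Xihat xhat * B.transpose))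
    (tauhat τ : (Fin 2 → ℝ) → (Fin 2 → ℝ))
    (htausmooth : ∀ i : Fin 2, ContDiffOn ℝ 1 (fun x => tauhat x i) Uhat)
    (htau : ∀ xhat ∈ Uhat, τ (F xhat) = |B.det|⁻¹ • B.mulVec (tauhat xhat))
    (uhat u : (Fin 2 → ℝ) → ℝ)
    (huhatsmooth : ContDiffOn ℝ 2 uhat Uhat)
    (hu : ∀ xhat ∈ Uhat, u (F xhat) = uhat xhat)
    (That : Set (Fin 2 → ℝ)) (hThatcpt : IsCompact That)
    (hThatmeas : MeasurableSet That) (hThatsub : That ⊆ Uhat)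
    (T : Set (Fin 2 → ℝ)) (hT : T = F '' That) :
    ∫ x in T, (u x * divVec τ x + gradF u x ⬝ᵥ (τ x - DivMat Ξ x)
        - frob (hessian u x) (Ξ x))
      = ∫ xhat in That, (uhat xhat * divVec tauhat xhat
          + gradF uhat xhat ⬝ᵥ (tauhat xhat - DivMat Xihat xhat)
          - frob (hessian uhat xhat) (Xihat xhat)) := by
  have hdne : B.det ≠ 0 := hB.ne_zero
  have habs : |B.det| ≠ 0 := abs_ne_zero.mpr hdne
  have hT2 : T = (fun z : Fin 2 → ℝ => B.mulVec z + a) '' That := by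
    rw [hT]; exact Set.image_congr fun z _ => hF z
  have hu2 : ∀ y ∈ Uhat, u (B.mulVec y + a) = uhat y := fun y hy => by
    rw [← hF y]; exact hu y hy
  have htau2 : ∀ y ∈ Uhat, τ (B.mulVec y + a) = |B.det|⁻¹ • B.mulVec (tauhat y) :=
    fun y hy => by rw [← hF y]; exact htau y hy
  have hXi2 : ∀ y ∈ Uhat, Ξ (B.mulVec y + a) = |B.det|⁻¹ • (B * Xihat y * B.transpose) :=
    fun y hy => by rw [← hF y]; exact hXi y hy
  have hdet : (LinearMap.toContinuousLinearMap (Matrix.mulVecLin B)).det = B.det := by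
    show LinearMap.det _ = _
    rw [LinearMap.coe_toContinuousLinearMap, ← Matrix.toLin'_apply', LinearMap.det_toLin']
  have hinj : Set.InjOn (fun z : Fin 2 → ℝ => B.mulVec z + a) That := by
    intro p _ q _ h
    have h2 := congrArg (fun y => B⁻¹.mulVec (y - a)) h
    simpa only [add_sub_cancel_right, Matrix.mulVec_mulVec, Matrix.nonsing_inv_mul B hB,
      Matrix.one_mulVec] using h2
  rw [hT2, integral_image_eq_integral_abs_det_fderiv_smul volume hThatmeas
    (fun z _ => (hasFDerivAt_affine_add B a z).hasFDerivWithinAt) hinj]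
  refine setIntegral_congr_fun hThatmeas fun xh hxh => ?_
  have hxU : xh ∈ Uhat := hThatsub hxh
  beta_reduce
  rw [hdet]
  -- differentiability facts
  have htaud : ∀ m : Fin 2, DifferentiableOn ℝ (fun y => tauhat y m) Uhat :=
    fun m => (htausmooth m).differentiableOn one_ne_zero
  have hXid : ∀ m n : Fin 2, DifferentiableOn ℝ (fun y => Xihat y m n) Uhat :=
    fun m n => (hXismooth m n).differentiableOn one_ne_zero
  have hud : DifferentiableOn ℝ uhat Uhat := huhatsmooth.differentiableOn (by norm_num)
  have hpdud : ∀ j : Fin 2, DifferentiableOn ℝ (pd j uhat) Uhat := by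
    intro j
    have h1 : ContDiffOn ℝ 1 (fun y => fderiv ℝ uhat y) Uhat :=
      huhatsmooth.fderiv_of_isOpen hUhat (by norm_num)
    exact (h1.clm_apply contDiffOn_const).differentiableOn one_ne_zero
  -- first derivatives of u
  have hpu : ∀ y ∈ Uhat, ∀ k : Fin 2, pd k u (B.mulVec y + a)
      = B⁻¹ 0 k * pd 0 uhat y + B⁻¹ 1 k * pd 1 uhat y :=
    fun y hy k => transfer_pd B hB a Uhat hUhat u uhat hud hu2 hy k
  -- second derivatives of u
  have hphess : ∀ i j : Fin 2, pd i (pd j u) (B.mulVec xh + a)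
      = B⁻¹ 0 i * (B⁻¹ 0 j * pd 0 (pd 0 uhat) xh + B⁻¹ 1 j * pd 0 (pd 1 uhat) xh)
      + B⁻¹ 1 i * (B⁻¹ 0 j * pd 1 (pd 0 uhat) xh + B⁻¹ 1 j * pd 1 (pd 1 uhat) xh) := by
    intro i j
    have hg : DifferentiableOn ℝ
        (fun y => B⁻¹ 0 j * pd 0 uhat y + B⁻¹ 1 j * pd 1 uhat y) Uhat :=
      fun y hy => (((hpdud 0) y hy).const_mul _).add (((hpdud 1) y hy).const_mul _)
    rw [transfer_pd B hB a Uhat hUhat (pd j u) _ hg (fun y hy => hpu y hy j) hxU i,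
      pd_comb2 ((hpdud 0).differentiableAt (hUhat.mem_nhds hxU))
        ((hpdud 1).differentiableAt (hUhat.mem_nhds hxU)) _ _ 0,
      pd_comb2 ((hpdud 0).differentiableAt (hUhat.mem_nhds hxU))
        ((hpdud 1).differentiableAt (hUhat.mem_nhds hxU)) _ _ 1]
  -- first derivatives of τ
  have hptau : ∀ i k : Fin 2, pd k (fun y => τ y i) (B.mulVec xh + a)
      = B⁻¹ 0 k * ((|B.det|⁻¹ * B i 0) * pd 0 (fun y => tauhat y 0) xh
          + (|B.det|⁻¹ * B i 1) * pd 0 (fun y => tauhat y 1) xh)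
      + B⁻¹ 1 k * ((|B.det|⁻¹ * B i 0) * pd 1 (fun y => tauhat y 0) xh
          + (|B.det|⁻¹ * B i 1) * pd 1 (fun y => tauhat y 1) xh) := by
    intro i k
    have hg : DifferentiableOn ℝ
        (fun y => (|B.det|⁻¹ * B i 0) * tauhat y 0 + (|B.det|⁻¹ * B i 1) * tauhat y 1) Uhat :=
      fun y hy => (((htaud 0) y hy).const_mul _).add (((htaud 1) y hy).const_mul _)
    have hfg : ∀ y ∈ Uhat, τ (B.mulVec y + a) i
        = (|B.det|⁻¹ * B i 0) * tauhat y 0 + (|B.det|⁻¹ * B i 1) * tauhat y 1 := by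
      intro y hy
      rw [htau2 y hy]
      simp only [Pi.smul_apply, Matrix.mulVec, dotProduct, Fin.sum_univ_two, smul_eq_mul]
      ring
    rw [transfer_pd B hB a Uhat hUhat (fun y => τ y i) _ hg hfg hxU k,
      pd_comb2 ((htaud 0).differentiableAt (hUhat.mem_nhds hxU))
        ((htaud 1).differentiableAt (hUhat.mem_nhds hxU)) _ _ 0,
      pd_comb2 ((htaud 0).differentiableAt (hUhat.mem_nhds hxU))
        ((htaud 1).differentiableAt (hUhat.mem_nhds hxU)) _ _ 1]
  -- first derivatives of Ξ
  have hpXi : ∀ i j k : Fin 2, pd k (fun y => Ξ y i j) (B.mulVec xh + a)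
      = B⁻¹ 0 k * ((|B.det|⁻¹ * (B i 0 * B j 0)) * pd 0 (fun y => Xihat y 0 0) xh
          + (|B.det|⁻¹ * (B i 0 * B j 1)) * pd 0 (fun y => Xihat y 0 1) xh
          + (|B.det|⁻¹ * (B i 1 * B j 0)) * pd 0 (fun y => Xihat y 1 0) xh
          + (|B.det|⁻¹ * (B i 1 * B j 1)) * pd 0 (fun y => Xihat y 1 1) xh)
      + B⁻¹ 1 k * ((|B.det|⁻¹ * (B i 0 * B j 0)) * pd 1 (fun y => Xihat y 0 0) xh
          + (|B.det|⁻¹ * (B i 0 * B j 1)) * pd 1 (fun y => Xihat y 0 1) xh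
          + (|B.det|⁻¹ * (B i 1 * B j 0)) * pd 1 (fun y => Xihat y 1 0) xh
          + (|B.det|⁻¹ * (B i 1 * B j 1)) * pd 1 (fun y => Xihat y 1 1) xh) := by
    intro i j k
    have hg : DifferentiableOn ℝ
        (fun y => (|B.det|⁻¹ * (B i 0 * B j 0)) * Xihat y 0 0
          + (|B.det|⁻¹ * (B i 0 * B j 1)) * Xihat y 0 1
          + (|B.det|⁻¹ * (B i 1 * B j 0)) * Xihat y 1 0
          + (|B.det|⁻¹ * (B i 1 * B j 1)) * Xihat y 1 1) Uhat :=
      fun y hy => (((((hXid 0 0) y hy).const_mul _).add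
        (((hXid 0 1) y hy).const_mul _)).add
        (((hXid 1 0) y hy).const_mul _)).add
        (((hXid 1 1) y hy).const_mul _)
    have hfg : ∀ y ∈ Uhat, Ξ (B.mulVec y + a) i j
        = (|B.det|⁻¹ * (B i 0 * B j 0)) * Xihat y 0 0
          + (|B.det|⁻¹ * (B i 0 * B j 1)) * Xihat y 0 1
          + (|B.det|⁻¹ * (B i 1 * B j 0)) * Xihat y 1 0
          + (|B.det|⁻¹ * (B i 1 * B j 1)) * Xihat y 1 1 := by
      intro y hy
      rw [hXi2 y hy]
      simp only [Matrix.smul_apply, Matrix.mul_apply, Matrix.transpose_apply,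
        Fin.sum_univ_two, smul_eq_mul]
      ring
    rw [transfer_pd B hB a Uhat hUhat (fun y => Ξ y i j) _ hg hfg hxU k,
      pd_comb4 ((hXid 0 0).differentiableAt (hUhat.mem_nhds hxU))
        ((hXid 0 1).differentiableAt (hUhat.mem_nhds hxU))
        ((hXid 1 0).differentiableAt (hUhat.mem_nhds hxU))
        ((hXid 1 1).differentiableAt (hUhat.mem_nhds hxU)) _ _ _ _ 0,
      pd_comb4 ((hXid 0 0).differentiableAt (hUhat.mem_nhds hxU))
        ((hXid 0 1).differentiableAt (hUhat.mem_nhds hxU))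
        ((hXid 1 0).differentiableAt (hUhat.mem_nhds hxU))
        ((hXid 1 1).differentiableAt (hUhat.mem_nhds hxU)) _ _ _ _ 1]
  -- values
  have huv : u (B.mulVec xh + a) = uhat xh := hu2 xh hxU
  have htv : ∀ i : Fin 2, τ (B.mulVec xh + a) i
      = |B.det|⁻¹ * (B i 0 * tauhat xh 0 + B i 1 * tauhat xh 1) := by
    intro i; rw [htau2 xh hxU]
    simp only [Pi.smul_apply, Matrix.mulVec, dotProduct, Fin.sum_univ_two, smul_eq_mul]
  have hXv : ∀ i j : Fin 2, Ξ (B.mulVec xh + a) i j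
      = |B.det|⁻¹ * ((B i 0 * Xihat xh 0 0 + B i 1 * Xihat xh 1 0) * B j 0
          + (B i 0 * Xihat xh 0 1 + B i 1 * Xihat xh 1 1) * B j 1) := by
    intro i j; rw [hXi2 xh hxU]
    simp only [Matrix.smul_apply, Matrix.mul_apply, Matrix.transpose_apply,
      Fin.sum_univ_two, smul_eq_mul]
  -- explicit inverse entries
  have hBinv : B⁻¹ = (B.det)⁻¹ • !![B 1 1, -(B 0 1); -(B 1 0), B 0 0] := by
    rw [Matrix.inv_def, Matrix.adjugate_fin_two, Ring.inverse_eq_inv']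
  have h00 : B⁻¹ 0 0 = B.det⁻¹ * B 1 1 := by rw [hBinv]; simp
  have h01 : B⁻¹ 0 1 = B.det⁻¹ * (-(B 0 1)) := by rw [hBinv]; simp
  have h10 : B⁻¹ 1 0 = B.det⁻¹ * (-(B 1 0)) := by rw [hBinv]; simp
  have h11 : B⁻¹ 1 1 = B.det⁻¹ * B 0 0 := by rw [hBinv]; simp
  simp only [divVec, gradF, DivMat, hessian, frob, Matrix.of_apply, dotProduct, Pi.sub_apply,
    Fin.sum_univ_two, smul_eq_mul]
  rw [huv, htv 0, htv 1, hXv 0 0, hXv 0 1, hXv 1 0, hXv 1 1,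
    hpu xh hxU 0, hpu xh hxU 1,
    hptau 0 0, hptau 1 1,
    hpXi 0 0 0, hpXi 0 1 1, hpXi 1 0 0, hpXi 1 1 1,
    hphess 0 0, hphess 0 1, hphess 1 0, hphess 1 1,
    h00, h01, h10, h11, Matrix.det_fin_two B]
  have hdne2 : B 0 0 * B 1 1 - B 0 1 * B 1 0 ≠ 0 := by
    rw [← Matrix.det_fin_two B]; exact hdne
  have habs2 : |B 0 0 * B 1 1 - B 0 1 * B 1 0| ≠ 0 := by
    rw [← Matrix.det_fin_two B]; exact habs
  field_simp
  ring
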